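/- Fix k ≥ 2 and an index j ∈ {1,…,k}, and define ℓ : ℝ^k → ℝ by ℓ(v) = log(1 + Σ_{i∈{1,…,k}∖{j}} exp(1 − v_j + v_i)). Then for every w ∈ ℝ^k, the Hessian matrix H of ℓ at w satisfies vᵀ H v ≤ 2 ‖v‖_∞² for all v ∈ ℝ^k. -/

import Mathlib

open scoped BigOperators

noncomputable section

namespace SoftmaxHessianAux

/-- The linear functional `u ↦ u i - u j`. -/
def Lmap {k : ℕ} (i j : Fin k) : (Fin k → ℝ) →L[ℝ] ℝ :=
  ContinuousLinearMap.proj (R := ℝ) (φ := fun _ : Fin k => ℝ) i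
    - ContinuousLinearMap.proj (R := ℝ) (φ := fun _ : Fin k => ℝ) j

@[simp] lemma Lmap_apply {k : ℕ} (i j : Fin k) (x : Fin k → ℝ) :
    Lmap i j x = x i - x j := rfl

/-- The denominator function. -/
def Afun {k : ℕ} (j : Fin k) : (Fin k → ℝ) → ℝ :=
  fun u => 1 + ∑ i ∈ Finset.univ.erase j, Real.exp (1 - u j + u i)

lemma Afun_pos {k : ℕ} (j : Fin k) (u : Fin k → ℝ) : 0 < Afun j u := by
  have : (0:ℝ) ≤ ∑ i ∈ Finset.univ.erase j, Real.exp (1 - u j + u i) :=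
    Finset.sum_nonneg fun i _ => (Real.exp_pos _).le
  unfold Afun; linarith

lemma hterm {k : ℕ} (i j : Fin k) (u : Fin k → ℝ) :
    HasFDerivAt (fun x : Fin k → ℝ => Real.exp (1 - x j + x i))
      (Real.exp (1 - u j + u i) • Lmap i j) u := by
  have hlin : HasFDerivAt (fun x : Fin k → ℝ => 1 - x j + x i) (Lmap i j) u := by
    have h := ((hasFDerivAt_const (1:ℝ) u).fun_sub
        ((ContinuousLinearMap.proj (R := ℝ) (φ := fun _ : Fin k => ℝ) j).hasFDerivAt)).fun_add
        ((ContinuousLinearMap.proj (R := ℝ) (φ := fun _ : Fin k => ℝ) i).hasFDerivAt)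
    exact h.congr_fderiv (by ext x; simp [Lmap]; ring)
  exact hlin.exp

lemma hA {k : ℕ} (j : Fin k) (u : Fin k → ℝ) :
    HasFDerivAt (Afun j)
      (∑ i ∈ Finset.univ.erase j, Real.exp (1 - u j + u i) • Lmap i j) u := by
  have hsum := HasFDerivAt.fun_sum (fun i (_ : i ∈ Finset.univ.erase j) => hterm i j u)
  have h2 := (hasFDerivAt_const (1:ℝ) u).fun_add hsum
  simp only [zero_add] at h2
  exact h2

lemma Afun_contDiff {k : ℕ} (j : Fin k) : ContDiff ℝ 2 (Afun j) := by
  refine contDiff_const.add (ContDiff.sum fun i _ => ?_)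
  exact (Real.contDiff_exp.of_le le_top).comp
    ((contDiff_const.sub
      ((ContinuousLinearMap.proj (R := ℝ) (φ := fun _ : Fin k => ℝ) j).contDiff)).add
      ((ContinuousLinearMap.proj (R := ℝ) (φ := fun _ : Fin k => ℝ) i).contDiff))

end SoftmaxHessianAux

set_option maxHeartbeats 1000000 in
open SoftmaxHessianAux in
/-- **Hessian bound for the softmax loss.**
For `ℓ(v) = log(1 + ∑_{i ≠ j} exp(1 - v_j + v_i))`, the Hessian `H` of `ℓ` at any point `w`
satisfies `vᵀ H v ≤ 2 ‖v‖_∞²` for all `v`. -/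
theorem softmax_loss_hessian_bound
    (k : ℕ) (hk : 2 ≤ k) (j : Fin k)
    (ℓ : (Fin k → ℝ) → ℝ)
    (hℓ : ∀ v, ℓ v = Real.log (1 + ∑ i ∈ Finset.univ.erase j, Real.exp (1 - v j + v i)))
    (w v : Fin k → ℝ) :
    iteratedFDeriv ℝ 2 ℓ w ![v, v] ≤ 2 * ‖v‖ ^ 2 := by
  classical
  have hℓfun : ℓ = fun u => Real.log (Afun j u) := funext hℓ
  have hApos := Afun_pos j
  -- first derivative
  have hℓ' : ∀ u, HasFDerivAt ℓ
      ((Afun j u)⁻¹ • ∑ i ∈ Finset.univ.erase j, Real.exp (1 - u j + u i) • Lmap i j) u := by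
    intro u
    rw [hℓfun]
    exact (hA j u).log (hApos u).ne'
  have hfd : ∀ u, fderiv ℝ ℓ u
      = (Afun j u)⁻¹ • ∑ i ∈ Finset.univ.erase j, Real.exp (1 - u j + u i) • Lmap i j :=
    fun u => (hℓ' u).fderiv
  -- smoothness
  have hℓcd : ContDiff ℝ 2 ℓ := by
    rw [hℓfun]; exact (Afun_contDiff j).log fun u => (hApos u).ne'
  have hdiff : DifferentiableAt ℝ (fderiv ℝ ℓ) w :=
    ((hℓcd.fderiv_right (m := 1) (by norm_num)).differentiable (by norm_num)).differentiableAt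
  -- abbreviations at the point w
  set T : Finset (Fin k) := Finset.univ.erase j with hT
  have hgrad : (fun u => fderiv ℝ ℓ u v)
      = fun u => (Afun j u)⁻¹ * ∑ i ∈ T, Real.exp (1 - u j + u i) * (v i - v j) := by
    funext u
    rw [hfd u]
    simp [ContinuousLinearMap.sum_apply]
  -- derivative of the gradient component
  have hNder : HasFDerivAt (fun u => ∑ i ∈ T, Real.exp (1 - u j + u i) * (v i - v j))
      (∑ i ∈ T, (Real.exp (1 - w j + w i) * (v i - v j)) • Lmap i j) w := by
    refine HasFDerivAt.fun_sum fun i _ => ?_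
    have h := (hterm i j w).mul_const (v i - v j)
    simpa [smul_smul, mul_comm] using h
  have hInv : HasFDerivAt (fun u => (Afun j u)⁻¹)
      (-(((Afun j w) ^ 2)⁻¹ • ∑ i ∈ T, Real.exp (1 - w j + w i) • Lmap i j)) w := by
    have h := (hasDerivAt_inv (hApos w).ne').comp_hasFDerivAt w (hA j w)
    simpa only [Function.comp_def, neg_smul, smul_smul] using h
  have hg := hInv.fun_mul hNder
  set Q := ∑ i ∈ T, Real.exp (1 - w j + w i) * (v i - v j) ^ 2 with hQdef
  set N := ∑ i ∈ T, Real.exp (1 - w j + w i) * (v i - v j) with hNdef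
  have hval : fderiv ℝ (fun u => (Afun j u)⁻¹ * ∑ i ∈ T, Real.exp (1 - u j + u i) * (v i - v j)) w v
      = (Afun j w)⁻¹ * Q - N * (((Afun j w) ^ 2)⁻¹ * N) := by
    have hBv : (∑ i ∈ T, Real.exp (1 - w j + w i) • Lmap i j) v = N := by
      rw [ContinuousLinearMap.sum_apply, hNdef]
      exact Finset.sum_congr rfl fun i _ => by
        rw [ContinuousLinearMap.smul_apply, Lmap_apply, smul_eq_mul]
    have hCv : (∑ i ∈ T, (Real.exp (1 - w j + w i) * (v i - v j)) • Lmap i j) v = Q := by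
      rw [ContinuousLinearMap.sum_apply, hQdef]
      exact Finset.sum_congr rfl fun i _ => by
        rw [ContinuousLinearMap.smul_apply, Lmap_apply, smul_eq_mul]; ring
    rw [hg.fderiv, ContinuousLinearMap.add_apply, ContinuousLinearMap.smul_apply,
      ContinuousLinearMap.smul_apply, ContinuousLinearMap.neg_apply,
      ContinuousLinearMap.smul_apply, hBv, hCv, smul_eq_mul, smul_eq_mul, smul_eq_mul]
    ring
  -- assemble the second derivative value
  have key : iteratedFDeriv ℝ 2 ℓ w ![v, v]
      = (Afun j w)⁻¹ * Q - N * (((Afun j w) ^ 2)⁻¹ * N) := by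
    rw [iteratedFDeriv_two_apply]
    have h1 : fderiv ℝ (fun u => fderiv ℝ ℓ u v) w
        = (fderiv ℝ (fderiv ℝ ℓ) w).flip v := by
      rw [fderiv_clm_apply hdiff (differentiableAt_const v)]
      simp
    have h2 : fderiv ℝ (fderiv ℝ ℓ) w (![v, v] 0) (![v, v] 1)
        = fderiv ℝ (fun u => fderiv ℝ ℓ u v) w v := by
      rw [h1]; rfl
    rw [h2, hgrad, hval]
  rw [key]
  -- now the bound
  set S := ∑ i ∈ T, Real.exp (1 - w j + w i) with hSdef
  set P := ∑ i ∈ T, Real.exp (1 - w j + w i) * v i with hPdef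
  set R := ∑ i ∈ T, Real.exp (1 - w j + w i) * v i ^ 2 with hRdef
  have hAw : Afun j w = 1 + S := rfl
  have hSpos : 0 ≤ S := Finset.sum_nonneg fun i _ => (Real.exp_pos _).le
  have hQ' : Q = R - 2 * v j * P + v j ^ 2 * S := by
    rw [hQdef, hRdef, hPdef, hSdef, Finset.mul_sum, Finset.mul_sum,
      ← Finset.sum_sub_distrib, ← Finset.sum_add_distrib]
    exact Finset.sum_congr rfl fun i _ => by ring
  have hN' : N = P - v j * S := by
    rw [hNdef, hPdef, hSdef, Finset.mul_sum, ← Finset.sum_sub_distrib]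
    exact Finset.sum_congr rfl fun i _ => by ring
  have hb : ∀ i, v i ^ 2 ≤ ‖v‖ ^ 2 := by
    intro i
    have h : |v i| ≤ ‖v‖ := by simpa [Real.norm_eq_abs] using norm_le_pi_norm v i
    calc v i ^ 2 = |v i| ^ 2 := (sq_abs _).symm
      _ ≤ ‖v‖ ^ 2 := pow_le_pow_left₀ (abs_nonneg _) h 2
  have hRle : R ≤ ‖v‖ ^ 2 * S := by
    rw [hRdef, hSdef, Finset.mul_sum]
    refine Finset.sum_le_sum fun i _ => ?_
    have h1 := hb i
    have h2 := (Real.exp_pos (1 - w j + w i)).le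
    nlinarith
  have hM : (0:ℝ) ≤ ‖v‖ ^ 2 := by positivity
  have hkey : Q * Afun j w - N ^ 2 ≤ ‖v‖ ^ 2 * (Afun j w) ^ 2 := by
    rw [hAw, hQ', hN']
    nlinarith [sq_nonneg (v j + P), hb j,
      mul_nonneg hSpos (sub_nonneg.2 (hb j)),
      mul_nonneg hSpos (sub_nonneg.2 hRle)]
  have hApw := hApos w
  have heq : (Afun j w)⁻¹ * Q - N * (((Afun j w) ^ 2)⁻¹ * N)
      = (Q * Afun j w - N ^ 2) / (Afun j w) ^ 2 := by
    field_simp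
  rw [heq]
  rw [div_le_iff₀ (by positivity)]
  nlinarith [sq_nonneg (Afun j w)]
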